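/- Let w be a clique weighting and let G be an n-vertex K_5-free graph, where each edge e has weight w(r_e) for r_e the order of a largest clique of G containing e (so r_e ∈ {2,3,4}). Then w(G) = (2/n²)·∑_{e∈E(G)} w(e) ≤ (1/2)·max{ w(2), (4/3)·w(3), (3/2)·w(4) }. In particular, if w(2) = 1, w(3) ≤ 3/4 and w(4) ≤ 2/3, then w(G) ≤ 1/2; if w(3) ≥ 3/4 and w(3) ≥ (9/8)·w(4) and w(2) ≤ (4/3)·w(3), then w(G) ≤ (2/3)·w(3); and if w(4) ≥ 2/3 and w(3) ≤ (9/8)·w(4) and w(2) ≤ (3/2)·w(4), then w(G) ≤ (3/4)·w(4). -/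

import Mathlib

open Finset
open scoped Classical

/-- The order of a largest clique of `G` containing both `u` and `v`. -/
noncomputable def cliqueOrder {V : Type} [Fintype V] (G : SimpleGraph V) (u v : V) : ℕ :=
  sSup {r : ℕ | ∃ s : Finset V, G.IsNClique r s ∧ u ∈ s ∧ v ∈ s}

/-- `w(G) = (2/n²)·∑_{e ∈ E(G)} w(r_e)`, written as a sum over ordered pairs of
adjacent vertices (each edge is counted twice), divided by `n²`. -/
noncomputable def cliqueWeight {V : Type} [Fintype V] (G : SimpleGraph V) (w : ℕ → ℝ) : ℝ :=
  ((Fintype.card V : ℝ) ^ 2)⁻¹ *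
    ∑ u : V, ∑ v : V, if G.Adj u v then w (cliqueOrder G u v) else 0

/-- the weight r/(r-1) -/
noncomputable def fwt (r : ℕ) : ℝ := (r : ℝ) / ((r : ℝ) - 1)

lemma fwt_nonneg {r : ℕ} (hr : 2 ≤ r) : 0 ≤ fwt r := by
  have : (2:ℝ) ≤ (r:ℝ) := by exact_mod_cast hr
  unfold fwt
  apply div_nonneg <;> linarith

lemma fwt_antitone {a b : ℕ} (ha : 2 ≤ a) (hab : a ≤ b) : fwt b ≤ fwt a := by
  have ha' : (2:ℝ) ≤ (a:ℝ) := by exact_mod_cast ha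
  have hb' : (a:ℝ) ≤ (b:ℝ) := by exact_mod_cast hab
  unfold fwt
  rw [div_le_div_iff₀ (by linarith) (by linarith)]
  nlinarith

section CO
variable {V : Type} [Fintype V] {G : SimpleGraph V} {u v : V}

lemma cliqueOrder_bddAbove (u v : V) :
    BddAbove {r : ℕ | ∃ s : Finset V, G.IsNClique r s ∧ u ∈ s ∧ v ∈ s} := by
  refine ⟨Fintype.card V, ?_⟩
  rintro r ⟨s, hs, -, -⟩
  have := s.card_le_univ
  rw [hs.card_eq] at this
  simpa using this

lemma pair_mem_cliqueSet (h : G.Adj u v) :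
    2 ∈ {r : ℕ | ∃ s : Finset V, G.IsNClique r s ∧ u ∈ s ∧ v ∈ s} := by
  refine ⟨{u, v}, ⟨?_, ?_⟩, by simp, by simp⟩
  · rw [coe_insert, coe_singleton]
    exact SimpleGraph.isClique_pair.2 fun _ => h
  · rw [card_insert_of_notMem (by simp [h.ne]), card_singleton]

lemma le_cliqueOrder {r : ℕ} {s : Finset V} (hs : G.IsNClique r s) (hu : u ∈ s) (hv : v ∈ s) :
    r ≤ cliqueOrder G u v :=
  le_csSup (cliqueOrder_bddAbove u v) ⟨s, hs, hu, hv⟩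

lemma two_le_cliqueOrder (h : G.Adj u v) : 2 ≤ cliqueOrder G u v :=
  le_csSup (cliqueOrder_bddAbove u v) (pair_mem_cliqueSet h)

lemma cliqueOrder_le {m : ℕ} (h : G.Adj u v)
    (H : ∀ r (s : Finset V), G.IsNClique r s → u ∈ s → v ∈ s → r ≤ m) :
    cliqueOrder G u v ≤ m := by
  refine csSup_le ⟨2, pair_mem_cliqueSet h⟩ ?_
  rintro r ⟨s, hs, hu, hv⟩
  exact H r s hs hu hv

lemma cliqueOrder_comm (u v : V) : cliqueOrder G u v = cliqueOrder G v u := by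
  unfold cliqueOrder
  congr 1
  ext r
  exact ⟨fun ⟨s, h1, h2, h3⟩ => ⟨s, h1, h3, h2⟩, fun ⟨s, h1, h2, h3⟩ => ⟨s, h1, h3, h2⟩⟩

end CO

set_option maxHeartbeats 1000000 in
lemma localTuran : ∀ (n : ℕ) (V : Type) [Fintype V] (G : SimpleGraph V), Fintype.card V = n →
    (∑ u : V, ∑ v : V, if G.Adj u v then fwt (cliqueOrder G u v) else 0) ≤ (n : ℝ) ^ 2 := by
  intro n
  induction n using Nat.strong_induction_on with
  | _ n ih =>
  intro V _ G hcard
  set g : V → V → ℝ := fun u v => if G.Adj u v then fwt (cliqueOrder G u v) else 0 with hg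
  show (∑ u : V, ∑ v : V, g u v) ≤ (n : ℝ) ^ 2
  by_cases hE : ∀ u v : V, ¬ G.Adj u v
  · have : ∀ u v : V, g u v = 0 := fun u v => by simp [hg, hE u v]
    simp only [this, Finset.sum_const_zero]
    positivity
  push_neg at hE
  obtain ⟨x, y, hxy⟩ := hE
  -- a maximum clique Q
  obtain ⟨Q, hQmem, hQmax⟩ := Finset.exists_max_image
    ((univ : Finset (Finset V)).filter (fun s : Finset V => G.IsClique (s : Set V))) (fun s : Finset V => s.card)
    ⟨∅, by simp⟩
  rw [mem_filter] at hQmem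
  have hQclique : G.IsClique ↑Q := hQmem.2
  have hmax : ∀ s : Finset V, G.IsClique ↑s → s.card ≤ Q.card := fun s hs =>
    hQmax s (by simp [hs])
  set ω := Q.card with hω
  have hω2 : 2 ≤ ω := by
    have h2 : ({x, y} : Finset V).card ≤ ω := hmax _ (by
      rw [coe_insert, coe_singleton]; exact SimpleGraph.isClique_pair.2 fun _ => hxy)
    rwa [card_insert_of_notMem (by simp [hxy.ne]), card_singleton] at h2
  set R : Finset V := univ \ Q with hR
  set k := R.card with hk'
  have hQn : ω ≤ n := by rw [← hcard, ← Finset.card_univ]; exact card_le_univ Q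
  have hk : ω + k = n := by
    rw [hk', hR, card_sdiff_of_subset (subset_univ Q), Finset.card_univ, hcard]; omega
  -- symmetry of g
  have hsymm : ∀ u v : V, g u v = g v u := by
    intro u v
    simp only [hg]
    rw [G.adj_comm u v, cliqueOrder_comm u v]
  -- splitting the sum
  have h1 : ∀ (f : V → ℝ), ∑ v : V, f v = (∑ v ∈ Q, f v) + ∑ v ∈ R, f v := by
    intro f
    rw [← Finset.sum_sdiff (subset_univ Q)]
    exact add_comm _ _
  have hsplit : (∑ u : V, ∑ v : V, g u v) =
      (∑ u ∈ Q, ∑ v ∈ Q, g u v) + (∑ u ∈ Q, ∑ v ∈ R, g u v) +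
      ((∑ u ∈ R, ∑ v ∈ Q, g u v) + (∑ u ∈ R, ∑ v ∈ R, g u v)) := by
    rw [h1 (fun u => ∑ v : V, g u v)]
    rw [Finset.sum_congr rfl (fun u _ => h1 (g u)), Finset.sum_add_distrib]
    rw [Finset.sum_congr rfl (fun u (_ : u ∈ R) => h1 (g u)), Finset.sum_add_distrib]
  -- bound on A
  have hfω : ((ω:ℝ) - 1) * fwt ω = (ω:ℝ) := by
    have hne : (ω:ℝ) - 1 ≠ 0 := by
      have : (2:ℝ) ≤ (ω:ℝ) := by exact_mod_cast hω2
      linarith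
    rw [fwt, mul_div_cancel₀ _ hne]
  have hA : (∑ u ∈ Q, ∑ v ∈ Q, g u v) ≤ (ω:ℝ) * (ω:ℝ) := by
    have hinner : ∀ u ∈ Q, ∑ v ∈ Q, g u v ≤ ((ω:ℝ) - 1) * fwt ω := by
      intro u hu
      have h0 : g u u = 0 := by simp [hg]
      rw [← Finset.sum_erase (f := g u) Q h0]
      have hle : ∀ v ∈ Q.erase u, g u v ≤ fwt ω := by
        intro v hv
        by_cases hadj : G.Adj u v
        · simp only [hg, if_pos hadj]
          exact fwt_antitone hω2 (le_cliqueOrder ⟨hQclique, rfl⟩ hu (mem_of_mem_erase hv))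
        · simp [hg, hadj, fwt_nonneg hω2]
      calc ∑ v ∈ Q.erase u, g u v ≤ ∑ _v ∈ Q.erase u, fwt ω := Finset.sum_le_sum hle
        _ = ((Q.erase u).card : ℝ) * fwt ω := by rw [Finset.sum_const, nsmul_eq_mul]
        _ = ((ω:ℝ) - 1) * fwt ω := by
            rw [card_erase_of_mem hu, ← hω, Nat.cast_sub (by omega : 1 ≤ ω), Nat.cast_one]
    calc (∑ u ∈ Q, ∑ v ∈ Q, g u v) ≤ ∑ _u ∈ Q, ((ω:ℝ) - 1) * fwt ω := Finset.sum_le_sum hinner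
      _ = (ω:ℝ) * (((ω:ℝ) - 1) * fwt ω) := by rw [Finset.sum_const, nsmul_eq_mul, ← hω]
      _ = (ω:ℝ) * (ω:ℝ) := by rw [hfω]
  -- bound on C (outside × inside)
  have hC : (∑ u ∈ R, ∑ v ∈ Q, g u v) ≤ (k:ℝ) * (ω:ℝ) := by
    have hinner : ∀ u ∈ R, ∑ v ∈ Q, g u v ≤ (ω:ℝ) := by
      intro u hu
      have huQ : u ∉ Q := by
        rw [hR, mem_sdiff] at hu; exact hu.2
      set Qf := Q.filter (fun v => G.Adj u v) with hQf
      set d := Qf.card with hd'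
      have hQfsub : Qf ⊆ Q := filter_subset _ _
      have hQfclique : G.IsClique ↑(insert u Qf) := by
        rw [coe_insert]
        refine (hQclique.subset (by exact_mod_cast hQfsub)).insert ?_
        intro b hb _
        rw [Finset.mem_coe, hQf, mem_filter] at hb
        exact hb.2
      have huQf : u ∉ Qf := fun h => huQ (hQfsub h)
      have hcardQf : (insert u Qf).card = d + 1 := card_insert_of_notMem huQf
      have hdω : d + 1 ≤ ω := by
        have := hmax _ hQfclique; rwa [hcardQf] at this
      have hfilter : ∑ v ∈ Q, g u v = ∑ v ∈ Qf, g u v := by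
        rw [hQf]
        refine (Finset.sum_filter_of_ne ?_).symm
        intro v _ hne
        by_contra hadj
        exact hne (by simp [hg, hadj])
      rw [hfilter]
      by_cases hd : d = 0
      · have hQf0 : Qf = ∅ := card_eq_zero.mp (hd' ▸ hd)
        rw [hQf0, Finset.sum_empty]
        positivity
      · have hd1 : 1 ≤ d := Nat.one_le_iff_ne_zero.2 hd
        have hle : ∀ v ∈ Qf, g u v ≤ fwt (d + 1) := by
          intro v hv
          have hadj : G.Adj u v := by rw [hQf, mem_filter] at hv; exact hv.2
          simp only [hg, if_pos hadj]
          exact fwt_antitone (by omega)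
            (le_cliqueOrder ⟨hQfclique, hcardQf⟩ (mem_insert_self _ _) (mem_insert_of_mem hv))
        calc ∑ v ∈ Qf, g u v ≤ ∑ _v ∈ Qf, fwt (d + 1) := Finset.sum_le_sum hle
          _ = (d:ℝ) * fwt (d + 1) := by rw [Finset.sum_const, nsmul_eq_mul, ← hd']
          _ = (d:ℝ) + 1 := by
              have hdne : (d:ℝ) ≠ 0 := by exact_mod_cast hd
              rw [fwt]
              push_cast
              field_simp
              rw [add_sub_cancel_right, div_self hdne]
          _ ≤ (ω:ℝ) := by exact_mod_cast hdω
    calc (∑ u ∈ R, ∑ v ∈ Q, g u v) ≤ ∑ _u ∈ R, (ω:ℝ) := Finset.sum_le_sum hinner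
      _ = (k:ℝ) * (ω:ℝ) := by rw [Finset.sum_const, nsmul_eq_mul, ← hk']
  -- B = C by symmetry
  have hBC : (∑ u ∈ Q, ∑ v ∈ R, g u v) = ∑ u ∈ R, ∑ v ∈ Q, g u v := by
    rw [Finset.sum_comm]
    exact Finset.sum_congr rfl fun u _ => Finset.sum_congr rfl fun v _ => hsymm _ _
  -- bound on D via induction
  have hD : (∑ u ∈ R, ∑ v ∈ R, g u v) ≤ (k:ℝ) ^ 2 := by
    set G' : SimpleGraph {x : V // x ∈ R} := SimpleGraph.comap (Subtype.val) G with hG'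
    have hcard' : Fintype.card {x : V // x ∈ R} = k := Fintype.card_coe R
    have hklt : k < n := by omega
    have hind := ih k hklt {x : V // x ∈ R} G' hcard'
    have hrw : (∑ u ∈ R, ∑ v ∈ R, g u v) = ∑ a : {x : V // x ∈ R}, ∑ b : {x : V // x ∈ R}, g ↑a ↑b := by
      rw [← Finset.sum_coe_sort R (fun u => ∑ v ∈ R, g u v)]
      exact Finset.sum_congr rfl fun a _ => (Finset.sum_coe_sort R (fun v => g ↑a v)).symm
    rw [hrw]
    refine le_trans (Finset.sum_le_sum fun a _ => Finset.sum_le_sum fun b _ => ?_) hind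
    by_cases hadj : G.Adj ↑a ↑b
    · have hadj' : G'.Adj a b := hadj
      simp only [hg]
      rw [if_pos hadj, if_pos hadj']
      refine fwt_antitone (two_le_cliqueOrder hadj') ?_
      refine cliqueOrder_le hadj' ?_
      intro r s' hs' ha hb
      refine le_cliqueOrder (G := G) (s := s'.map (Function.Embedding.subtype _)) ⟨?_, ?_⟩ ?_ ?_
      · intro p hp q hq hne
        rw [Finset.coe_map, Set.mem_image] at hp hq
        obtain ⟨p', hp', rfl⟩ := hp
        obtain ⟨q', hq', rfl⟩ := hq
        have : G'.Adj p' q' := hs'.1 (by exact_mod_cast hp') (by exact_mod_cast hq')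
          (fun h => hne (by rw [h]))
        exact this
      · rw [Finset.card_map, hs'.2]
      · exact Finset.mem_map.2 ⟨a, ha, rfl⟩
      · exact Finset.mem_map.2 ⟨b, hb, rfl⟩
    · have hadj' : ¬ G'.Adj a b := hadj
      simp only [hg]
      rw [if_neg hadj, if_neg hadj']
  -- combine
  rw [hsplit, hBC]
  have hn : (n:ℝ) = (ω:ℝ) + (k:ℝ) := by exact_mod_cast hk.symm
  nlinarith [hA, hC, hD]

/-- For a clique weighting `w` and a `K₅`-free graph `G`,
`w(G) ≤ (1/2)·max{w(2), (4/3)w(3), (3/2)w(4)}`, together with the three particular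
consequences for the regions where `T(n,2)`, `T(n,3)`, `T(n,4)` are extremal. -/
theorem cliqueWeight_K5free (w : ℕ → ℝ) (hw : ∀ r, 2 ≤ r → 0 ≤ w r ∧ w r ≤ 1)
    (n : ℕ) (G : SimpleGraph (Fin n)) (hG : G.CliqueFree 5) :
    cliqueWeight G w ≤ 1 / 2 * max (w 2) (max (4 / 3 * w 3) (3 / 2 * w 4)) ∧
    ((w 2 = 1 ∧ w 3 ≤ 3 / 4 ∧ w 4 ≤ 2 / 3) → cliqueWeight G w ≤ 1 / 2) ∧
    ((3 / 4 ≤ w 3 ∧ 9 / 8 * w 4 ≤ w 3 ∧ w 2 ≤ 4 / 3 * w 3) →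
      cliqueWeight G w ≤ 2 / 3 * w 3) ∧
    ((2 / 3 ≤ w 4 ∧ w 3 ≤ 9 / 8 * w 4 ∧ w 2 ≤ 3 / 2 * w 4) →
      cliqueWeight G w ≤ 3 / 4 * w 4) := by
  set M : ℝ := max (w 2) (max (4 / 3 * w 3) (3 / 2 * w 4)) with hM
  have hM0 : 0 ≤ M := le_trans (hw 2 le_rfl).1 (le_max_left _ _)
  have hmain : cliqueWeight G w ≤ 1 / 2 * M := by
    -- edgewise comparison
    have hedge : ∀ u v : Fin n, (if G.Adj u v then w (cliqueOrder G u v) else 0) ≤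
        M / 2 * (if G.Adj u v then fwt (cliqueOrder G u v) else 0) := by
      intro u v
      by_cases hadj : G.Adj u v
      · rw [if_pos hadj, if_pos hadj]
        have h2 : 2 ≤ cliqueOrder G u v := two_le_cliqueOrder hadj
        have h4 : cliqueOrder G u v ≤ 4 := by
          refine cliqueOrder_le hadj ?_
          intro r s hs _ _
          by_contra hr
          exact (hG.mono (by omega : 5 ≤ r)) s hs
        set r := cliqueOrder G u v
        have hw2 : w 2 ≤ M := le_max_left _ _
        have hw3 : 4 / 3 * w 3 ≤ M := le_trans (le_max_left _ _) (le_max_right _ _)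
        have hw4 : 3 / 2 * w 4 ≤ M := le_trans (le_max_right _ _) (le_max_right _ _)
        interval_cases r
        · rw [show fwt 2 = 2 by norm_num [fwt]]; linarith
        · rw [show fwt 3 = 3 / 2 by norm_num [fwt]]; linarith
        · rw [show fwt 4 = 4 / 3 by norm_num [fwt]]; linarith
      · rw [if_neg hadj, if_neg hadj, mul_zero]
    have hsum : (∑ u : Fin n, ∑ v : Fin n, if G.Adj u v then w (cliqueOrder G u v) else 0) ≤
        M / 2 * ((Fintype.card (Fin n) : ℝ) ^ 2) := by
      calc (∑ u : Fin n, ∑ v : Fin n, if G.Adj u v then w (cliqueOrder G u v) else 0)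
          ≤ ∑ u : Fin n, ∑ v : Fin n,
              M / 2 * (if G.Adj u v then fwt (cliqueOrder G u v) else 0) :=
            Finset.sum_le_sum fun u _ => Finset.sum_le_sum fun v _ => hedge u v
        _ = M / 2 * ∑ u : Fin n, ∑ v : Fin n,
              (if G.Adj u v then fwt (cliqueOrder G u v) else 0) := by
            rw [Finset.mul_sum]
            exact Finset.sum_congr rfl fun u _ => (Finset.mul_sum _ _ _).symm
        _ ≤ M / 2 * ((Fintype.card (Fin n) : ℝ) ^ 2) := by
            apply mul_le_mul_of_nonneg_left _ (by linarith)
            exact localTuran (Fintype.card (Fin n)) (Fin n) G rfl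
    rw [cliqueWeight]
    rcases Nat.eq_zero_or_pos n with hn | hn
    · subst hn
      simp [hM0]
    · have hc : (0:ℝ) < ((Fintype.card (Fin n) : ℝ)) ^ 2 := by
        have : 0 < Fintype.card (Fin n) := by simpa using hn
        positivity
      calc ((Fintype.card (Fin n) : ℝ) ^ 2)⁻¹ *
            (∑ u : Fin n, ∑ v : Fin n, if G.Adj u v then w (cliqueOrder G u v) else 0)
          ≤ ((Fintype.card (Fin n) : ℝ) ^ 2)⁻¹ *
            (M / 2 * ((Fintype.card (Fin n) : ℝ) ^ 2)) := by
            exact mul_le_mul_of_nonneg_left hsum (by positivity)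
        _ = 1 / 2 * M := by field_simp; rw [mul_div_cancel_left₀ _ (ne_of_gt (by simpa using hn))]
  refine ⟨hmain, ?_, ?_, ?_⟩
  · rintro ⟨h2, h3, h4⟩
    have : M ≤ 1 := max_le (by linarith) (max_le (by linarith) (by linarith))
    linarith
  · rintro ⟨h3, h4, h2⟩
    have : M ≤ 4 / 3 * w 3 := max_le (by linarith) (max_le le_rfl (by linarith))
    linarith
  · rintro ⟨h4, h3, h2⟩
    have : M ≤ 3 / 2 * w 4 := max_le (by linarith) (max_le (by linarith) le_rfl)
    linarith
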